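/- arXiv:1801.09236 — 3 statements merged into one kernel-verified Lean document; each statement's English description precedes it below -/
import Mathlib

section
/- Let K be a norm ball in ℝ^m with associated norm ‖·‖_K, and let V be a random vector on ℝ^m with density f_V(v) proportional to exp(-a‖v‖_K) for some a > 0. Then the random variable ‖V‖_K is distributed as Gamma(m, a), i.e., it has density g(r) = a^m r^(m-1) exp(-ar)/Γ(m) for r > 0. -/
open MeasureTheory

/-- A set `K ⊆ ℝ^m` is a *norm ball* if it is convex, bounded, absorbing and
symmetric about zero. -/
def IsNormBall {m : ℕ} (K : Set (Fin m → ℝ)) : Prop :=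
  Convex ℝ K ∧ Bornology.IsBounded K ∧ Absorbent ℝ K ∧ ∀ u ∈ K, -u ∈ K

open Set ENNReal Pointwise

/-- Pushforward of a measure with density `g ∘ f` is the pushforward with density `g`. -/
lemma map_withDensity_comp {α β : Type*} [MeasurableSpace α] [MeasurableSpace β]
    (μ : Measure α) {f : α → β} (hf : Measurable f) {g : β → ℝ≥0∞} (hg : Measurable g) :
    Measure.map f (μ.withDensity (g ∘ f)) = (Measure.map f μ).withDensity g := by
  ext s hs
  rw [Measure.map_apply hf hs, withDensity_apply _ (hf hs), withDensity_apply _ hs,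
    setLIntegral_map hs hg hf]
  rfl

/-- A convex, absorbent, symmetric set in `ℝ^m` is a neighborhood of the origin. -/
lemma IsNormBall.mem_nhds_zero {m : ℕ} {K : Set (Fin m → ℝ)} (hK : IsNormBall K) :
    K ∈ nhds (0 : Fin m → ℝ) := by
  obtain ⟨hconv, hbdd, habs, hsymm⟩ := hK
  have h0K : (0 : Fin m → ℝ) ∈ K := habs.zero_mem
  -- the affine span of `K` is everything
  have hspan : affineSpan ℝ K = ⊤ := by
    rw [AffineSubspace.affineSpan_eq_top_iff_vectorSpan_eq_top_of_nonempty ℝ _ _ ⟨0, h0K⟩]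
    rw [Submodule.eq_top_iff']
    intro x
    obtain ⟨c, hc, hx⟩ : ∃ c : ℝ, ({x} : Set (Fin m → ℝ)) ⊆ c • K ∧ c ≠ 0 :=
      ((habs x).eventually.and (Bornology.eventually_ne_cobounded 0)).exists
    obtain ⟨k, hkK, hkx⟩ : ∃ k ∈ K, c • k = x := by
      have := hc (mem_singleton x); simpa [Set.mem_smul_set] using this
    have hkmem : k ∈ vectorSpan ℝ K := by
      have : k -ᵥ (0 : Fin m → ℝ) ∈ K -ᵥ K := Set.vsub_mem_vsub hkK h0K
      simpa [vectorSpan] using Submodule.subset_span this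
    simpa [hkx] using Submodule.smul_mem _ c hkmem
  have hint : (interior K).Nonempty :=
    hconv.interior_nonempty_iff_affineSpan_eq_top.mpr hspan
  obtain ⟨x, hx⟩ := hint
  have h0 : (0 : Fin m → ℝ) ∈ interior K := by
    have hxneg : -x ∈ K := hsymm x (interior_subset hx)
    have h0seg : (0 : Fin m → ℝ) ∈ openSegment ℝ x (-x) := by
      refine ⟨1/2, 1/2, by norm_num, by norm_num, by norm_num, ?_⟩
      simp [smul_neg]
    exact hconv.openSegment_interior_self_subset_interior hx hxneg h0seg
  exact mem_interior_iff_mem_nhds.mp h0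

/-- $K$-norm marginal distribution: if `V` has density proportional to
`exp(-a‖v‖_K)` on `ℝ^m`, then `‖V‖_K ~ Gamma(m, a)`. -/
theorem gauge_map_eq_gammaMeasure {m : ℕ} (hm : 0 < m) (K : Set (Fin m → ℝ))
    (hK : IsNormBall K) (a : ℝ) (ha : 0 < a)
    (μ : Measure (Fin m → ℝ))
    (hμ : μ = volume.withDensity (fun v => ENNReal.ofReal
      (Real.exp (-a * gauge K v) / ∫ w : Fin m → ℝ, Real.exp (-a * gauge K w)))) :
    Measure.map (gauge K) μ = ProbabilityTheory.gammaMeasure m a := by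
  obtain ⟨hconv, hbdd, habs, hsymm⟩ := id hK
  have hnhds : K ∈ nhds (0 : Fin m → ℝ) := hK.mem_nhds_zero
  set n : (Fin m → ℝ) → ℝ := gauge K with hn
  have hcont : Continuous n := continuous_gauge hconv hnhds
  have hmeas : Measurable n := hcont.measurable
  have hnn : ∀ x, 0 ≤ n x := fun x => gauge_nonneg x
  set B := volume {x : Fin m → ℝ | n x ≤ 1} with hB
  have hBfin : B ≠ ⊤ := by
    have h1 : {x : Fin m → ℝ | n x ≤ 1} ⊆ closure K := fun x hx =>
      (gauge_le_one_iff_mem_closure hconv hnhds).1 hx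
    exact ne_top_of_le_ne_top
      (Metric.isCompact_of_isClosed_isBounded isClosed_closure hbdd.closure).measure_lt_top.ne
      (measure_mono h1)
  have hBpos : 0 < B := by
    refine lt_of_lt_of_le ?_ (measure_mono (fun x (hx : n x < 1) => le_of_lt hx))
    refine (isOpen_lt hcont continuous_const).measure_pos volume ⟨0, ?_⟩
    simp [hn, gauge_zero]
  -- scaling of sublevel sets
  have hlevel : ∀ r : ℝ, 0 < r →
      volume {x : Fin m → ℝ | n x ≤ r} = ENNReal.ofReal (r ^ m) * B := by
    intro r hr
    have hset : {x : Fin m → ℝ | n x ≤ r} = r • {x : Fin m → ℝ | n x ≤ 1} := by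
      ext x
      rw [mem_smul_set_iff_inv_smul_mem₀ hr.ne']
      simp only [mem_setOf_eq]
      rw [hn, gauge_smul_of_nonneg (inv_nonneg.2 hr.le), smul_eq_mul, inv_mul_le_iff₀ hr, mul_one]
    rw [hset, Measure.addHaar_smul, Module.finrank_fin_fun,
      abs_of_pos (pow_pos hr m)]
  have hzero : volume {x : Fin m → ℝ | n x ≤ 0} = 0 := by
    haveI : Nonempty (Fin m) := ⟨⟨0, hm⟩⟩
    have hvb : Bornology.IsVonNBounded ℝ K := (NormedSpace.isVonNBounded_iff ℝ).2 hbdd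
    have : {x : Fin m → ℝ | n x ≤ 0} = {0} := by
      ext x
      simp only [mem_setOf_eq, mem_singleton_iff]
      constructor
      · intro hx
        exact (gauge_eq_zero habs hvb).1 (le_antisymm hx (hnn x))
      · rintro rfl; simp [hn, gauge_zero]
    rw [this, measure_singleton]
  have hFfin : ∀ r : ℝ, volume (n ⁻¹' Iic r) ≠ ⊤ := by
    intro r
    have hsub : n ⁻¹' Iic r ⊆ {x : Fin m → ℝ | n x ≤ max r 1} := fun x hx =>
      show n x ≤ max r 1 from le_trans hx (le_max_left _ _)
    refine ne_top_of_le_ne_top ?_ (measure_mono hsub)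
    rw [hlevel _ (lt_of_lt_of_le one_pos (le_max_right r 1))]
    exact ENNReal.mul_ne_top ENNReal.ofReal_ne_top hBfin
  -- value of F
  have hFval : ∀ r : ℝ, 0 ≤ r → volume (n ⁻¹' Iic r) = ENNReal.ofReal (r ^ m) * B := by
    intro r hr
    rcases hr.lt_or_eq with hr' | rfl
    · exact hlevel r hr'
    · rw [show n ⁻¹' Iic 0 = {x | n x ≤ 0} from rfl]; simpa [zero_pow hm.ne'] using hzero
  have hFzero : ∀ r : ℝ, r ≤ 0 → volume (n ⁻¹' Iic r) = 0 := by
    intro r hr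
    refine measure_mono_null (fun x hx => le_trans hx hr) hzero
  -- the pushforward of Lebesgue measure under the gauge
  set hd : ℝ → ℝ≥0∞ :=
    fun r => (Ioi (0:ℝ)).indicator (fun r => ENNReal.ofReal (m * r ^ (m-1)) * B) r with hhd
  have hd_meas : Measurable hd := by
    refine Measurable.indicator ?_ measurableSet_Ioi
    exact (((measurable_id.pow_const _).const_mul _).ennreal_ofReal).mul_const _
  have hmap : Measure.map n volume = volume.withDensity hd := by
    haveI : IsLocallyFiniteMeasure (Measure.map n volume) := by
      refine ⟨fun x => ⟨Ioc (x-1) (x+1), Ioc_mem_nhds (by linarith) (by linarith), ?_⟩⟩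
      rw [Measure.map_apply hmeas measurableSet_Ioc]
      refine lt_of_le_of_lt (measure_mono (fun y hy => hy.2)) ?_
      exact lt_top_iff_ne_top.2 (hFfin (x+1))
    refine Measure.ext_of_Ioc _ _ (fun s t hst => ?_)
    rw [Measure.map_apply hmeas measurableSet_Ioc, withDensity_apply _ measurableSet_Ioc]
    have hIoc : n ⁻¹' Ioc s t = n ⁻¹' Iic t \ n ⁻¹' Iic s := by
      rw [← Iic_sdiff_Iic, preimage_diff]
    have hLHS : volume (n ⁻¹' Ioc s t) = volume (n ⁻¹' Iic t) - volume (n ⁻¹' Iic s) := by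
      rw [hIoc, measure_diff (preimage_mono (Iic_subset_Iic.2 hst.le))
        ((hmeas measurableSet_Iic).nullMeasurableSet) (hFfin s)]
    rcases le_or_gt t 0 with ht | ht
    · rw [hLHS, hFzero t ht, hFzero s (hst.le.trans ht)]
      rw [setLIntegral_congr_fun measurableSet_Ioc (fun r hr => by
        show hd r = 0
        exact indicator_of_notMem
          (fun (h : (0:ℝ) < r) => absurd (hr.2.trans ht) (not_le.2 h)) _), lintegral_zero]
      simp
    · set s' := max s 0 with hs'
      have hs'0 : 0 ≤ s' := le_max_right _ _
      have hs't : s' ≤ t := max_le hst.le ht.le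
      have hFs : volume (n ⁻¹' Iic s) = ENNReal.ofReal (s' ^ m) * B := by
        rcases le_or_gt s 0 with hs | hs
        · rw [hFzero s hs, hs', max_eq_right hs, zero_pow hm.ne']
          simp
        · rw [hs', max_eq_left hs.le]
          exact hFval s hs.le
      -- right-hand side computation
      have hRHS : ∫⁻ r in Ioc s t, hd r = ENNReal.ofReal (t ^ m - s' ^ m) * B := by
        rw [hhd]
        rw [lintegral_indicator measurableSet_Ioi, Measure.restrict_restrict measurableSet_Ioi]
        rw [inter_comm, Ioc_inter_Ioi]
        have hint : IntegrableOn (fun r : ℝ => (m:ℝ) * r ^ (m-1)) (Ioc s' t) volume := by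
          exact (continuous_const.mul (continuous_pow (m-1))).integrableOn_Ioc
        have hae : 0 ≤ᵐ[volume.restrict (Ioc s' t)] fun r : ℝ => (m:ℝ) * r ^ (m-1) := by
          filter_upwards [ae_restrict_mem measurableSet_Ioc] with r hr
          have : (0:ℝ) ≤ r := hs'0.trans hr.1.le
          positivity
        rw [lintegral_mul_const _ ((measurable_id'.pow_const _).const_mul _).ennreal_ofReal]
        rw [← ofReal_integral_eq_lintegral_ofReal hint hae]
        congr 1
        rw [← intervalIntegral.integral_of_le hs't]
        rw [intervalIntegral.integral_const_mul, integral_pow]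
        have hm1 : m - 1 + 1 = m := Nat.succ_pred_eq_of_pos hm
        rw [hm1]
        have hmR : ((m - 1 : ℕ) : ℝ) + 1 = (m : ℝ) := by
          rw [Nat.cast_sub hm]; ring
        rw [hmR]
        have hm0 : (m : ℝ) ≠ 0 := Nat.cast_ne_zero.2 hm.ne'
        field_simp
      rw [hRHS, hLHS, hFval t ht.le, hFs]
      rw [ENNReal.ofReal_sub _ (pow_nonneg hs'0 m), ENNReal.sub_mul fun _ _ => hBfin]
  -- normalizing constant
  set c : ℝ := ∫ w : Fin m → ℝ, Real.exp (-a * n w) with hc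
  set g : ℝ → ℝ≥0∞ := fun r => ENNReal.ofReal (Real.exp (-a * r) / c) with hg
  have hg_meas : Measurable g :=
    (((measurable_id'.const_mul (-a)).exp).div_const c).ennreal_ofReal
  set K0 : ℝ := B.toReal * m * Real.Gamma m / a ^ m with hK0
  have hBt : 0 < B.toReal := ENNReal.toReal_pos hBpos.ne' hBfin
  have hΓ : 0 < Real.Gamma m := Real.Gamma_pos_of_pos (by exact_mod_cast hm)
  have hK0pos : 0 < K0 := by
    have : (0:ℝ) < m := by exact_mod_cast hm
    rw [hK0]; positivity
  have hpt : ∀ r : ℝ, r ≠ 0 → hd r * ENNReal.ofReal (Real.exp (-a * r)) =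
      ENNReal.ofReal K0 * ProbabilityTheory.gammaPDF m a r := by
    intro r hr
    rcases hr.lt_or_gt with hneg | hpos
    · rw [ProbabilityTheory.gammaPDF_of_neg hneg]
      have : hd r = 0 := indicator_of_notMem (fun (h : (0:ℝ) < r) => absurd h (not_lt.2 hneg.le)) _
      rw [this, zero_mul, mul_zero]
    · have hdr : hd r = ENNReal.ofReal ((m:ℝ) * r ^ (m-1)) * B :=
        indicator_of_mem (mem_Ioi.2 hpos) _
      rw [hdr, ProbabilityTheory.gammaPDF_of_nonneg hpos.le]
      rw [← ENNReal.ofReal_toReal hBfin]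
      have h1 : (0:ℝ) ≤ (m:ℝ) * r ^ (m-1) := by positivity
      rw [← ENNReal.ofReal_mul h1, ← ENNReal.ofReal_mul (by positivity),
        ← ENNReal.ofReal_mul hK0pos.le]
      congr 1
      have hrpow : r ^ ((m:ℝ) - 1) = r ^ (m - 1 : ℕ) := by
        rw [← Real.rpow_natCast r (m-1)]
        congr 1
        rw [Nat.cast_sub hm]
        norm_num
      have hapow : a ^ ((m:ℝ)) = a ^ m := Real.rpow_natCast a m
      rw [hrpow, hapow, hK0, neg_mul]
      have hm0 : (m : ℝ) ≠ 0 := Nat.cast_ne_zero.2 hm.ne'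
      field_simp
  have hmeas_exp : Measurable fun r : ℝ => ENNReal.ofReal (Real.exp (-a * r)) :=
    ((measurable_id'.const_mul (-a)).exp).ennreal_ofReal
  have hpdf_meas : Measurable (ProbabilityTheory.gammaPDF m a) :=
    (ProbabilityTheory.measurable_gammaPDFReal m a).ennreal_ofReal
  have hae0 : ∀ᵐ r : ℝ ∂volume, r ≠ 0 := by
    refine ae_iff.2 ?_
    simp [measure_singleton]
  have hI : (∫⁻ x, ENNReal.ofReal (Real.exp (-a * n x))) = ENNReal.ofReal K0 := by
    rw [← lintegral_map hmeas_exp hmeas, hmap,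
      lintegral_withDensity_eq_lintegral_mul _ hd_meas hmeas_exp]
    calc (∫⁻ r, (hd * fun r => ENNReal.ofReal (Real.exp (-a*r))) r)
        = ∫⁻ r, ENNReal.ofReal K0 * ProbabilityTheory.gammaPDF m a r := by
          refine lintegral_congr_ae ?_
          filter_upwards [hae0] with r hr
          exact hpt r hr
      _ = ENNReal.ofReal K0 := by
          rw [lintegral_const_mul _ hpdf_meas,
            ProbabilityTheory.lintegral_gammaPDF_eq_one (by exact_mod_cast hm) ha, mul_one]
  have hint : Integrable (fun x : Fin m → ℝ => Real.exp (-a * n x)) volume := by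
    refine ⟨((hmeas.const_mul (-a)).exp).aestronglyMeasurable, ?_⟩
    rw [hasFiniteIntegral_iff_ofReal (ae_of_all _ fun x => (Real.exp_pos _).le), hI]
    exact ENNReal.ofReal_lt_top
  have hcK0 : c = K0 := by
    have h1 := ofReal_integral_eq_lintegral_ofReal hint (ae_of_all _ fun x => (Real.exp_pos _).le)
    rw [hI] at h1
    exact (ENNReal.ofReal_eq_ofReal_iff
      (integral_nonneg fun x => (Real.exp_pos _).le) hK0pos.le).1 h1
  have hμ' : μ = volume.withDensity (g ∘ n) := hμ
  rw [hμ', map_withDensity_comp volume hmeas hg_meas, hmap, ← withDensity_mul _ hd_meas hg_meas]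
  show volume.withDensity (hd * g) = volume.withDensity (ProbabilityTheory.gammaPDF m a)
  refine withDensity_congr_ae ?_
  filter_upwards [hae0] with r hr
  show hd r * g r = ProbabilityTheory.gammaPDF m a r
  have : g r = ENNReal.ofReal (Real.exp (-a * r)) * ENNReal.ofReal c⁻¹ := by
    show ENNReal.ofReal (Real.exp (-a * r) / c) = _
    rw [div_eq_mul_inv, ENNReal.ofReal_mul (Real.exp_pos _).le]
  rw [this, ← mul_assoc, hpt r hr, mul_right_comm, ← ENNReal.ofReal_mul hK0pos.le,
    hcK0, mul_inv_cancel₀ hK0pos.ne', ENNReal.ofReal_one, one_mul]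
end

section
/- Let V have density f_V(v) = (ε/Δ)^m exp(-(ε/Δ)‖v‖_K)/(m! λ(K)) on ℝ^m, where ε, Δ > 0 and K is a norm ball. Then the differential entropy of V equals H(V) = log((Δ·e/ε)^m · m! · λ(K)). -/
open MeasureTheory

section EntropyAux

open MeasureTheory Set Real Filter Pointwise

set_option maxHeartbeats 1000000

-- step A
lemma aux_zero_mem_interior {m : ℕ} {K : Set (Fin m → ℝ)} (hc : Convex ℝ K)
    (habs : Absorbent ℝ K) (hsym : ∀ u ∈ K, -u ∈ K) : (0 : Fin m → ℝ) ∈ interior K := by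
  have h0 : (0 : Fin m → ℝ) ∈ K := habs.zero_mem
  have hspan : Submodule.span ℝ K = ⊤ := by
    rw [Submodule.eq_top_iff']
    intro v
    obtain ⟨r, hr, hrc⟩ := (habs v).exists_pos
    have hv : v ∈ (max r 1) • K := Set.singleton_subset_iff.1 <| hrc (max r 1) (by
      rw [Real.norm_eq_abs, abs_of_pos (lt_of_lt_of_le hr (le_max_left r 1))]
      exact le_max_left r 1)
    obtain ⟨u, hu, rfl⟩ := hv
    exact Submodule.smul_mem _ _ (Submodule.subset_span hu)
  have hvs : vectorSpan ℝ K = ⊤ := by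
    rw [vectorSpan_def, eq_top_iff, ← hspan]
    apply Submodule.span_mono
    intro x hx
    exact ⟨x, hx, 0, h0, by simp⟩
  have haff : affineSpan ℝ K = ⊤ := by
    rw [AffineSubspace.affineSpan_eq_top_iff_vectorSpan_eq_top_of_nonempty (k := ℝ) (V := Fin m → ℝ) (P := Fin m → ℝ) ⟨0, h0⟩]
    exact hvs
  obtain ⟨x, hx⟩ := (hc.interior_nonempty_iff_affineSpan_eq_top).2 haff
  have := hc.combo_interior_self_mem_interior hx (hsym x (interior_subset hx))
    (by norm_num : (0:ℝ) < 1/2) (by norm_num : (0:ℝ) ≤ 1/2) (by norm_num)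
  simpa [smul_neg] using this

lemma aux_scale {m : ℕ} {K : Set (Fin m → ℝ)} (hc : Convex ℝ K) (h0 : K ∈ nhds (0 : Fin m → ℝ))
    {s : ℝ} (hs : 0 < s) :
    volume {v : Fin m → ℝ | gauge K v < s} = ENNReal.ofReal (s ^ m) * volume K := by
  have hset : {v : Fin m → ℝ | gauge K v < s} = s • {v : Fin m → ℝ | gauge K v < 1} := by
    ext v
    rw [mem_smul_set_iff_inv_smul_mem₀ hs.ne']
    simp only [Set.mem_setOf_eq]
    rw [gauge_smul_of_nonneg (inv_nonneg.2 hs.le), smul_eq_mul, inv_mul_eq_div, div_lt_one hs]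
  rw [hset, gauge_lt_one_eq_interior hc h0,
    Measure.addHaar_smul_of_nonneg volume hs.le,
    measure_interior_of_null_frontier (hc.addHaar_frontier volume), Module.finrank_fin_fun]

lemma aux_layer {m : ℕ} {K : Set (Fin m → ℝ)} (hc : Convex ℝ K) (h0 : K ∈ nhds (0 : Fin m → ℝ))
    (ρ : ℝ → ENNReal) (hρ : Measurable ρ) :
    ∫⁻ v : Fin m → ℝ, ∫⁻ s in Ioi (gauge K v), ρ s =
      ∫⁻ s in Ioi (0:ℝ), ρ s * (ENNReal.ofReal (s ^ m) * volume K) := by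
  have hg : Continuous (gauge K) := continuous_gauge hc h0
  set S : Set ((Fin m → ℝ) × ℝ) := {p | gauge K p.1 < p.2} with hSdef
  have hS : MeasurableSet S :=
    measurableSet_lt (hg.comp continuous_fst).measurable measurable_snd
  have h1 : ∀ v : Fin m → ℝ, (∫⁻ s in Ioi (gauge K v), ρ s)
      = ∫⁻ s, S.indicator (fun p => ρ p.2) (v, s) := by
    intro v
    rw [← lintegral_indicator measurableSet_Ioi]
    refine lintegral_congr fun s => ?_
    simp only [Set.indicator_apply, Set.mem_Ioi, hSdef, Set.mem_setOf_eq]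
  simp_rw [h1]
  have hFm : AEMeasurable
      (Function.uncurry fun (v : Fin m → ℝ) (s : ℝ) => S.indicator (fun p => ρ p.2) (v, s))
      ((volume : Measure (Fin m → ℝ)).prod (volume : Measure ℝ)) :=
    ((hρ.comp measurable_snd).indicator hS).aemeasurable
  rw [lintegral_lintegral_swap hFm]
  have h2 : ∀ s : ℝ, (∫⁻ v : Fin m → ℝ, S.indicator (fun p => ρ p.2) (v, s))
      = ρ s * volume {v : Fin m → ℝ | gauge K v < s} := by
    intro s
    have hms : MeasurableSet {v : Fin m → ℝ | gauge K v < s} :=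
      measurableSet_lt hg.measurable measurable_const
    have : (fun v : Fin m → ℝ => S.indicator (fun p => ρ p.2) (v, s))
        = {v : Fin m → ℝ | gauge K v < s}.indicator (fun _ => ρ s) := by
      funext v
      simp only [Set.indicator_apply, hSdef, Set.mem_setOf_eq]
    rw [this, lintegral_indicator hms, setLIntegral_const]
  simp_rw [h2]
  rw [← lintegral_indicator measurableSet_Ioi]
  refine lintegral_congr fun s => ?_
  by_cases h : 0 < s
  · rw [Set.indicator_of_mem (Set.mem_Ioi.2 h), aux_scale hc h0 h]
  · have hempty : {v : Fin m → ℝ | gauge K v < s} = ∅ := by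
      ext v
      simp only [Set.mem_setOf_eq, Set.mem_empty_iff_false, iff_false, not_lt]
      exact le_trans (not_lt.1 h) (gauge_nonneg v)
    rw [Set.indicator_of_notMem (by simpa using h), hempty, measure_empty, mul_zero]

lemma aux_inner1 {c : ℝ} (hc : 0 < c) (r : ℝ) :
    ∫⁻ s in Ioi r, ENNReal.ofReal (c * Real.exp (-(c * s)))
      = ENNReal.ofReal (Real.exp (-(c * r))) := by
  have hi : IntegrableOn (fun s : ℝ => c * Real.exp (-(c * s))) (Ioi r) := by
    simpa [neg_mul, IntegrableOn] using (exp_neg_integrableOn_Ioi r hc).const_mul c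
  rw [← ofReal_integral_eq_lintegral_ofReal hi (ae_of_all _ fun s => by positivity)]
  congr 1
  have hderiv : ∀ x ∈ Ici r, HasDerivAt (fun s : ℝ => -Real.exp (-(c * s)))
      (c * Real.exp (-(c * x))) x := by
    intro x _
    have h1 : HasDerivAt (fun s : ℝ => -(c * s)) (-c) x := by
      simpa using ((hasDerivAt_id x).const_mul c).fun_neg
    have := (h1.exp).fun_neg
    exact this.congr_deriv (by ring)
  have htend : Tendsto (fun s : ℝ => -Real.exp (-(c * s))) atTop (nhds 0) := by
    rw [show (0:ℝ) = -0 by ring]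
    refine Tendsto.neg ?_
    have : Tendsto (fun s : ℝ => c * s) atTop atTop :=
      Tendsto.const_mul_atTop hc tendsto_id
    simpa [Function.comp_def] using Real.tendsto_exp_neg_atTop_nhds_zero.comp this
  rw [integral_Ioi_of_hasDerivAt_of_tendsto' hderiv hi htend]
  ring

lemma aux_inner2 {c : ℝ} (hc : 0 < c) {r : ℝ} (hr : 0 ≤ r) :
    ∫⁻ s in Ioi r, ENNReal.ofReal (c ^ 2 * s * Real.exp (-(c * s)))
      = ENNReal.ofReal ((c * r + 1) * Real.exp (-(c * r))) := by
  have hi0 : IntegrableOn (fun s : ℝ => s * Real.exp (-(c * s))) (Ioi 0) := by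
    have := integrableOn_rpow_mul_exp_neg_mul_rpow (s := 1) (p := 1) (by norm_num) one_pos hc
    simpa [Real.rpow_one, neg_mul] using this
  have hi : IntegrableOn (fun s : ℝ => c ^ 2 * s * Real.exp (-(c * s))) (Ioi r) := by
    have := (hi0.mono_set (Set.Ioi_subset_Ioi hr)).const_mul (c ^ 2)
    simpa [mul_assoc, IntegrableOn] using this
  rw [← ofReal_integral_eq_lintegral_ofReal hi ?_]
  · congr 1
    have hderiv : ∀ x ∈ Ici r, HasDerivAt (fun s : ℝ => -((c * s + 1) * Real.exp (-(c * s))))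
        (c ^ 2 * x * Real.exp (-(c * x))) x := by
      intro x _
      have h1 : HasDerivAt (fun s : ℝ => c * s + 1) c x := by
        simpa using ((hasDerivAt_id x).const_mul c).add_const 1
      have h2 : HasDerivAt (fun s : ℝ => Real.exp (-(c * s))) (Real.exp (-(c * x)) * (-c)) x := by
        have : HasDerivAt (fun s : ℝ => -(c * s)) (-c) x := by
          simpa using ((hasDerivAt_id x).const_mul c).fun_neg
        exact this.exp
      have := (h1.fun_mul h2).fun_neg
      exact this.congr_deriv (by ring)
    have htend : Tendsto (fun s : ℝ => -((c * s + 1) * Real.exp (-(c * s)))) atTop (nhds 0) := by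
      rw [show (0:ℝ) = -0 by ring]
      refine Tendsto.neg ?_
      have hbase : Tendsto (fun y : ℝ => (y + 1) * Real.exp (-y)) atTop (nhds 0) := by
        have h1 : Tendsto (fun y : ℝ => y ^ 1 * Real.exp (-y)) atTop (nhds 0) :=
          Real.tendsto_pow_mul_exp_neg_atTop_nhds_zero 1
        have h2 := Real.tendsto_exp_neg_atTop_nhds_zero
        have := h1.add h2
        rw [show (0:ℝ) = 0 + 0 by ring]
        convert this using 2 with y
        ring
      have hcomp : Tendsto (fun s : ℝ => c * s) atTop atTop :=
        Tendsto.const_mul_atTop hc tendsto_id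
      simpa [Function.comp_def] using hbase.comp hcomp
    rw [integral_Ioi_of_hasDerivAt_of_tendsto' hderiv hi htend]
    ring
  · refine (ae_restrict_iff' measurableSet_Ioi).2 (ae_of_all _ fun s hs => ?_)
    have hs0 : 0 < s := lt_of_le_of_lt hr hs
    positivity

lemma aux_int {c : ℝ} (hc : 0 < c) (k : ℕ) :
    IntegrableOn (fun s : ℝ => s ^ k * Real.exp (-(c * s))) (Ioi (0:ℝ)) := by
  have := integrableOn_rpow_mul_exp_neg_mul_rpow (s := (k:ℝ)) (p := 1)
    (lt_of_lt_of_le neg_one_lt_zero (Nat.cast_nonneg k)) one_pos hc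
  simpa [Real.rpow_natCast, Real.rpow_one, neg_mul] using this

lemma aux_outer {c : ℝ} (hc : 0 < c) (k : ℕ) :
    ∫ s in Ioi (0:ℝ), s ^ k * Real.exp (-(c * s)) = (k.factorial : ℝ) / c ^ (k + 1) := by
  have h := Real.integral_rpow_mul_exp_neg_mul_Ioi (a := (k:ℝ) + 1) (by positivity) hc
  rw [add_sub_cancel_right] at h
  simp_rw [Real.rpow_natCast] at h
  rw [show ((k:ℝ) + 1) = ((k + 1 : ℕ) : ℝ) by push_cast; ring, Real.rpow_natCast] at h
  rw [show Real.Gamma (((k + 1 : ℕ) : ℝ)) = (k.factorial : ℝ) by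
    push_cast; exact Real.Gamma_nat_eq_factorial k] at h
  rw [h, one_div, inv_pow]
  field_simp

lemma aux_meas {a b : ℝ} (k : ℕ) :
    Measurable fun s : ℝ => ENNReal.ofReal (a * (s ^ k * Real.exp (-(b * s)))) := by
  refine Measurable.ennreal_ofReal ?_
  exact (continuous_const.mul ((continuous_pow k).mul
    (((continuous_const.mul continuous_id).neg).rexp))).measurable

lemma aux_L1 {m : ℕ} {K : Set (Fin m → ℝ)} (hc : Convex ℝ K) (h0 : K ∈ nhds (0 : Fin m → ℝ))
    {c : ℝ} (hcpos : 0 < c) :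
    ∫⁻ v : Fin m → ℝ, ENNReal.ofReal (Real.exp (-(c * gauge K v)))
      = volume K * ENNReal.ofReal ((m.factorial : ℝ) / c ^ m) := by
  have hρ : Measurable fun s : ℝ => ENNReal.ofReal (c * Real.exp (-(c * s))) := by
    refine Measurable.ennreal_ofReal ?_
    exact (continuous_const.mul (((continuous_const.mul continuous_id).neg).rexp)).measurable
  calc ∫⁻ v : Fin m → ℝ, ENNReal.ofReal (Real.exp (-(c * gauge K v)))
      = ∫⁻ v : Fin m → ℝ, ∫⁻ s in Ioi (gauge K v), ENNReal.ofReal (c * Real.exp (-(c * s))) :=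
        lintegral_congr fun v => (aux_inner1 hcpos _).symm
    _ = ∫⁻ s in Ioi (0:ℝ), ENNReal.ofReal (c * Real.exp (-(c * s)))
          * (ENNReal.ofReal (s ^ m) * volume K) := aux_layer hc h0 _ hρ
    _ = ∫⁻ s in Ioi (0:ℝ), ENNReal.ofReal (c * (s ^ m * Real.exp (-(c * s)))) * volume K := by
        refine setLIntegral_congr_fun measurableSet_Ioi (fun s hs => ?_)
        rw [← mul_assoc, ← ENNReal.ofReal_mul (by positivity)]
        congr 2
        ring
    _ = (∫⁻ s in Ioi (0:ℝ), ENNReal.ofReal (c * (s ^ m * Real.exp (-(c * s))))) * volume K :=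
        lintegral_mul_const _ (aux_meas m)
    _ = ENNReal.ofReal (∫ s in Ioi (0:ℝ), c * (s ^ m * Real.exp (-(c * s)))) * volume K := by
        rw [ofReal_integral_eq_lintegral_ofReal ((aux_int hcpos m).const_mul c)
          ((ae_restrict_iff' measurableSet_Ioi).2 (ae_of_all _ fun s hs => by
            have : (0:ℝ) < s := hs
            positivity))]
    _ = volume K * ENNReal.ofReal ((m.factorial : ℝ) / c ^ m) := by
        rw [MeasureTheory.integral_const_mul, aux_outer hcpos m, mul_comm]
        congr 2
        field_simp
        ring

lemma aux_L2 {m : ℕ} {K : Set (Fin m → ℝ)} (hc : Convex ℝ K) (h0 : K ∈ nhds (0 : Fin m → ℝ))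
    {c : ℝ} (hcpos : 0 < c) :
    ∫⁻ v : Fin m → ℝ, ENNReal.ofReal ((c * gauge K v + 1) * Real.exp (-(c * gauge K v)))
      = volume K * ENNReal.ofReal (((m + 1).factorial : ℝ) / c ^ m) := by
  have hρ : Measurable fun s : ℝ => ENNReal.ofReal (c ^ 2 * s * Real.exp (-(c * s))) := by
    refine Measurable.ennreal_ofReal ?_
    exact ((continuous_const.mul continuous_id).mul
      (((continuous_const.mul continuous_id).neg).rexp)).measurable
  calc ∫⁻ v : Fin m → ℝ, ENNReal.ofReal ((c * gauge K v + 1) * Real.exp (-(c * gauge K v)))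
      = ∫⁻ v : Fin m → ℝ, ∫⁻ s in Ioi (gauge K v), ENNReal.ofReal (c ^ 2 * s * Real.exp (-(c * s))) :=
        lintegral_congr fun v => (aux_inner2 hcpos (gauge_nonneg v)).symm
    _ = ∫⁻ s in Ioi (0:ℝ), ENNReal.ofReal (c ^ 2 * s * Real.exp (-(c * s)))
          * (ENNReal.ofReal (s ^ m) * volume K) := aux_layer hc h0 _ hρ
    _ = ∫⁻ s in Ioi (0:ℝ), ENNReal.ofReal (c ^ 2 * (s ^ (m + 1) * Real.exp (-(c * s)))) * volume K := by
        refine setLIntegral_congr_fun measurableSet_Ioi (fun s hs => ?_)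
        have hs0 : (0:ℝ) < s := hs
        rw [← mul_assoc, ← ENNReal.ofReal_mul (by positivity)]
        congr 2
        ring
    _ = (∫⁻ s in Ioi (0:ℝ), ENNReal.ofReal (c ^ 2 * (s ^ (m + 1) * Real.exp (-(c * s))))) * volume K :=
        lintegral_mul_const _ (aux_meas (m + 1))
    _ = ENNReal.ofReal (∫ s in Ioi (0:ℝ), c ^ 2 * (s ^ (m + 1) * Real.exp (-(c * s)))) * volume K := by
        rw [ofReal_integral_eq_lintegral_ofReal ((aux_int hcpos (m + 1)).const_mul (c ^ 2))
          ((ae_restrict_iff' measurableSet_Ioi).2 (ae_of_all _ fun s hs => by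
            have : (0:ℝ) < s := hs
            positivity))]
    _ = volume K * ENNReal.ofReal (((m + 1).factorial : ℝ) / c ^ m) := by
        rw [MeasureTheory.integral_const_mul, aux_outer hcpos (m + 1), mul_comm]
        congr 2
        field_simp
        ring

end EntropyAux

set_option maxHeartbeats 1000000 in
/-- entropy of the $K$-norm mechanism: if `V` has density
`f_V(v) = (ε/Δ)^m exp(-(ε/Δ)‖v‖_K)/(m! λ(K))`, then its differential entropy is
`H(V) = E[-log f_V(V)] = log((Δ e/ε)^m ⋅ m! ⋅ λ(K))`. -/
theorem entropy_of_K_mech {m : ℕ} (hm : 0 < m) (K : Set (Fin m → ℝ))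
    (hK : IsNormBall K) (hKmeas : MeasurableSet K) (ε Δ : ℝ) (hε : 0 < ε) (hΔ : 0 < Δ)
    (f : (Fin m → ℝ) → ℝ)
    (hf : f = fun v => (ε / Δ) ^ m * Real.exp (-(ε / Δ) * gauge K v) /
      ((Nat.factorial m : ℝ) * (volume K).toReal)) :
    (∫ v : Fin m → ℝ, f v * (-Real.log (f v))) =
      Real.log ((Δ * Real.exp 1 / ε) ^ m * (Nat.factorial m : ℝ) * (volume K).toReal) := by
  obtain ⟨hconv, hbdd, habs, hsym⟩ := hK
  set c : ℝ := ε / Δ with hcdef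
  have hcpos : 0 < c := div_pos hε hΔ
  have hint : (0 : Fin m → ℝ) ∈ interior K := aux_zero_mem_interior hconv habs hsym
  have h0 : K ∈ nhds (0 : Fin m → ℝ) := mem_interior_iff_mem_nhds.1 hint
  have hg : Continuous (gauge K) := continuous_gauge hconv h0
  have hKfin : volume K ≠ ⊤ := hbdd.measure_lt_top.ne
  have hKpos : 0 < volume K :=
    lt_of_lt_of_le (isOpen_interior.measure_pos volume ⟨0, hint⟩) (measure_mono interior_subset)
  set vKr : ℝ := (volume K).toReal with hvdef
  have hvpos : 0 < vKr := ENNReal.toReal_pos hKpos.ne' hKfin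
  set a : ℝ := (m.factorial : ℝ) * vKr with hadef
  have hfacpos : (0:ℝ) < (m.factorial : ℝ) := by exact_mod_cast m.factorial_pos
  have hapos : 0 < a := by rw [hadef]; positivity
  set A : ℝ := Real.log a - m * Real.log c with hAdef
  have hu1nn : ∀ v : Fin m → ℝ, 0 ≤ Real.exp (-(c * gauge K v)) := fun v => (Real.exp_pos _).le
  have hu2nn : ∀ v : Fin m → ℝ,
      0 ≤ (c * gauge K v + 1) * Real.exp (-(c * gauge K v)) := fun v => by
    have hgn : 0 ≤ gauge K v := gauge_nonneg v
    positivity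
  have hu1m : AEStronglyMeasurable (fun v : Fin m → ℝ => Real.exp (-(c * gauge K v)))
      (volume : Measure (Fin m → ℝ)) :=
    (((continuous_const.mul hg).neg).rexp).aestronglyMeasurable
  have hu2m : AEStronglyMeasurable
      (fun v : Fin m → ℝ => (c * gauge K v + 1) * Real.exp (-(c * gauge K v)))
      (volume : Measure (Fin m → ℝ)) :=
    (((continuous_const.mul hg).add continuous_const).mul
      (((continuous_const.mul hg).neg).rexp)).aestronglyMeasurable
  have hL1 := aux_L1 (K := K) hconv h0 hcpos
  have hL2 := aux_L2 (K := K) hconv h0 hcpos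
  have hi1 : Integrable (fun v : Fin m → ℝ => Real.exp (-(c * gauge K v))) := by
    refine ⟨hu1m, ?_⟩
    rw [hasFiniteIntegral_iff_ofReal (ae_of_all _ hu1nn), hL1]
    exact ENNReal.mul_lt_top hKfin.lt_top ENNReal.ofReal_lt_top
  have hi2 : Integrable
      (fun v : Fin m → ℝ => (c * gauge K v + 1) * Real.exp (-(c * gauge K v))) := by
    refine ⟨hu2m, ?_⟩
    rw [hasFiniteIntegral_iff_ofReal (ae_of_all _ hu2nn), hL2]
    exact ENNReal.mul_lt_top hKfin.lt_top ENNReal.ofReal_lt_top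
  have hI1 : ∫ v : Fin m → ℝ, Real.exp (-(c * gauge K v))
      = vKr * ((m.factorial : ℝ) / c ^ m) := by
    rw [integral_eq_lintegral_of_nonneg_ae (ae_of_all _ hu1nn) hu1m, hL1, ENNReal.toReal_mul,
      ENNReal.toReal_ofReal (by positivity), ← hvdef]
  have hI2 : ∫ v : Fin m → ℝ, (c * gauge K v + 1) * Real.exp (-(c * gauge K v))
      = vKr * (((m + 1).factorial : ℝ) / c ^ m) := by
    rw [integral_eq_lintegral_of_nonneg_ae (ae_of_all _ hu2nn) hu2m, hL2, ENNReal.toReal_mul,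
      ENNReal.toReal_ofReal (by positivity), ← hvdef]
  have hpt : ∀ v : Fin m → ℝ, f v * (-Real.log (f v))
      = ((A - 1) * (c ^ m / a)) * Real.exp (-(c * gauge K v))
        + (c ^ m / a) * ((c * gauge K v + 1) * Real.exp (-(c * gauge K v))) := by
    intro v
    have hfv : f v = c ^ m * Real.exp (-(c * gauge K v)) / a := by
      rw [hf]; simp only [neg_mul]
    rw [hfv, Real.log_div (by positivity) hapos.ne',
      Real.log_mul (by positivity) (Real.exp_pos _).ne', Real.log_exp, Real.log_pow, hAdef]
    ring
  rw [integral_congr_ae (ae_of_all _ hpt), integral_add (hi1.const_mul _) (hi2.const_mul _),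
    integral_const_mul, integral_const_mul, hI1, hI2]
  have hΔε : Δ * Real.exp 1 / ε = Real.exp 1 / c := by
    rw [hcdef]; field_simp
  rw [hΔε]
  have hRHS : Real.log ((Real.exp 1 / c) ^ m * (m.factorial : ℝ) * vKr) = A + m := by
    rw [mul_assoc, Real.log_mul (by positivity) (by rw [← hadef]; exact hapos.ne'), ← hadef,
      Real.log_pow, Real.log_div (Real.exp_pos 1).ne' hcpos.ne', Real.log_exp, hAdef]
    ring
  have hfs : (((m + 1).factorial : ℕ) : ℝ) = ((m : ℝ) + 1) * (m.factorial : ℝ) := by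
    push_cast [Nat.factorial_succ]; ring
  rw [hRHS, hfs, hAdef, hadef]
  have hc0 : c ≠ 0 := hcpos.ne'
  have hv0 : vKr ≠ 0 := hvpos.ne'
  have hfac0 : (m.factorial : ℝ) ≠ 0 := hfacpos.ne'
  field_simp
  ring
end

section
/- Let V have density proportional to exp(-a‖v‖_K) on ℝ^m for a norm ball K and a > 0. Then for each α ∈ (0,1), the α-concentration set of V is S^α_V = t·K, where t is the α-quantile of the Gamma(m, a) distribution. -/
open MeasureTheory Pointwise Set

/-- `S` is an `α`-concentration set for the density `f`: a Lebesgue-smallest measurable set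
carrying probability at least `α` under the density `f`. -/
def IsConcSet {m : ℕ} (f : (Fin m → ℝ) → ℝ) (α : ℝ) (S : Set (Fin m → ℝ)) : Prop :=
  MeasurableSet S ∧ α ≤ ∫ x in S, f x ∧
    ∀ T : Set (Fin m → ℝ), MeasurableSet T → α ≤ (∫ x in T, f x) → volume S ≤ volume T

/-- CDF of the gamma distribution (removed from Mathlib; restored with its old definition). -/
noncomputable def ProbabilityTheory.gammaCDFReal (a r : ℝ) : StieltjesFunction ℝ :=
  ProbabilityTheory.cdf (ProbabilityTheory.gammaMeasure a r)

section Aux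

open Filter Topology
open scoped ENNReal NNReal

theorem KMech.aux_nhds {m : ℕ} (K : Set (Fin m → ℝ))
    (hconv : Convex ℝ K) (habs : Absorbent ℝ K) (hsymm : ∀ u ∈ K, -u ∈ K) :
    K ∈ 𝓝 (0 : Fin m → ℝ) := by
  have h0 : (0 : Fin m → ℝ) ∈ K := habs.zero_mem
  have hspan : Submodule.span ℝ K = ⊤ := by
    rw [Submodule.eq_top_iff']
    intro x
    obtain ⟨r, hr, h⟩ := (habs x).exists_pos
    have hx : x ∈ (max r 1) • K := by
      refine h _ ?_ rfl
      rw [Real.norm_eq_abs, abs_of_nonneg (by positivity)]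
      exact le_max_left _ _
    obtain ⟨k, hk, rfl⟩ := hx
    exact Submodule.smul_mem _ _ (Submodule.subset_span hk)
  have hvs : vectorSpan ℝ K = ⊤ := by
    rw [eq_top_iff, ← hspan]
    refine Submodule.span_le.2 fun x hx => ?_
    have : x ∈ K -ᵥ K := ⟨x, hx, 0, h0, by simp⟩
    exact Submodule.subset_span this
  have haff : affineSpan ℝ K = ⊤ := by
    rw [AffineSubspace.affineSpan_eq_top_iff_vectorSpan_eq_top_of_nonempty ℝ _ _ ⟨0, h0⟩]
    exact hvs
  obtain ⟨x, hx⟩ : (interior K).Nonempty := hconv.interior_nonempty_iff_affineSpan_eq_top.2 haff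
  have hKneg : -K = K := by
    apply subset_antisymm
    · intro u hu; simpa using hsymm _ (Set.mem_neg.1 hu)
    · intro u hu; rw [Set.mem_neg]; exact hsymm _ hu
  have hx' : -x ∈ interior K := by
    have h2 : -x ∈ -interior K := Set.neg_mem_neg.2 hx
    have h3 : -interior K ⊆ interior K :=
      interior_maximal (fun u hu => by
        simpa using hsymm _ (interior_subset (Set.mem_neg.1 hu))) isOpen_interior.neg
    exact h3 h2
  have h2 : (1/2 : ℝ) • x + (1/2 : ℝ) • (-x) ∈ interior K :=
    hconv.interior hx hx' (by norm_num) (by norm_num) (by norm_num)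
  have : (0 : Fin m → ℝ) ∈ interior K := by
    simpa [smul_neg] using h2
  exact mem_interior_iff_mem_nhds.1 this

theorem KMech.aux_vol {m : ℕ} (hm : 0 < m) (K : Set (Fin m → ℝ)) (hconv : Convex ℝ K)
    (hbdd : Bornology.IsBounded K) (habs : Absorbent ℝ K) (hnhds : K ∈ 𝓝 0) (t : ℝ) :
    volume {v | gauge K v ≤ t} = ENNReal.ofReal (max t 0 ^ m) * volume K := by
  have h0K : (0 : Fin m → ℝ) ∈ K := habs.zero_mem
  have hvnb : Bornology.IsVonNBounded ℝ K := (NormedSpace.isVonNBounded_iff ℝ).2 hbdd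
  rcases lt_trichotomy t 0 with ht | rfl | ht
  · have he : {v : Fin m → ℝ | gauge K v ≤ t} = ∅ := by
      ext v; simp only [mem_setOf_eq, mem_empty_iff_false, iff_false, not_le]
      exact lt_of_lt_of_le ht (gauge_nonneg v)
    rw [he, max_eq_right ht.le, zero_pow hm.ne', ENNReal.ofReal_zero, zero_mul, measure_empty]
  · have he : {v : Fin m → ℝ | gauge K v ≤ 0} = {0} := by
      ext v
      simp only [mem_setOf_eq, mem_singleton_iff]
      rw [← (gauge_eq_zero habs hvnb (x := v)), le_antisymm_iff]
      simp [gauge_nonneg v]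
    rw [he, max_self, zero_pow hm.ne', ENNReal.ofReal_zero, zero_mul]
    haveI : Nonempty (Fin m) := ⟨⟨0, hm⟩⟩
    exact measure_singleton 0
  · have h1 : {v : Fin m → ℝ | gauge K v ≤ t} = t • {v : Fin m → ℝ | gauge K v ≤ 1} := by
      ext v
      rw [mem_smul_set_iff_inv_smul_mem₀ ht.ne']
      simp only [mem_setOf_eq]
      rw [gauge_smul_of_nonneg (inv_nonneg.2 ht.le), smul_eq_mul, ← div_eq_inv_mul,
        div_le_one ht]
    have h2 : volume {v : Fin m → ℝ | gauge K v ≤ 1} = volume K := by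
      apply le_antisymm
      · calc volume {v : Fin m → ℝ | gauge K v ≤ 1}
            ≤ volume (K ∪ frontier K) := by
              apply measure_mono
              intro v hv
              rcases Classical.em (v ∈ K) with h | h
              · exact Or.inl h
              · have hc : v ∈ closure K := mem_closure_of_gauge_le_one hconv h0K habs hv
                exact Or.inr ⟨hc, fun hint => h (interior_subset hint)⟩
          _ ≤ volume K + volume (frontier K) := measure_union_le _ _
          _ = volume K := by rw [hconv.addHaar_frontier volume, add_zero]
      · exact measure_mono fun v hv => gauge_le_one_of_mem hv
    rw [h1, Measure.addHaar_smul_of_nonneg volume ht.le, h2, max_eq_left ht.le,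
      Module.finrank_fin_fun]

theorem KMech.aux_map {m : ℕ} (hm : 0 < m) (K : Set (Fin m → ℝ)) (hconv : Convex ℝ K)
    (hbdd : Bornology.IsBounded K) (habs : Absorbent ℝ K) (hnhds : K ∈ 𝓝 0) :
    Measure.map (gauge K) volume = volume K •
      volume.withDensity
        (Set.indicator (Ici 0) fun u => ENNReal.ofReal (m * u ^ (m - 1))) := by
  have hg : Continuous (gauge K) := continuous_gauge hconv hnhds
  have hKfin : volume K ≠ ⊤ := hbdd.measure_lt_top.ne
  have hvol := KMech.aux_vol hm K hconv hbdd habs hnhds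
  have hfin : ∀ t : ℝ, volume {v | gauge K v ≤ t} ≠ ⊤ := by
    intro t
    rw [hvol t]
    exact (ENNReal.mul_lt_top ENNReal.ofReal_lt_top hbdd.measure_lt_top).ne
  refine Measure.ext_of_Ioc' _ _ (fun a b hab => ?_) (fun a b hab => ?_)
  · rw [Measure.map_apply hg.measurable measurableSet_Ioc]
    have hsub : gauge K ⁻¹' Ioc a b ⊆ {v | gauge K v ≤ b} := fun v hv => hv.2
    exact ((measure_mono hsub).trans_lt (lt_top_iff_ne_top.2 (hfin b))).ne
  · rw [Measure.map_apply hg.measurable measurableSet_Ioc, Measure.smul_apply,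
      withDensity_apply _ measurableSet_Ioc, smul_eq_mul]
    have hpre : gauge K ⁻¹' Ioc a b = {v | gauge K v ≤ b} \ {v | gauge K v ≤ a} := by
      ext v; simp only [mem_preimage, mem_Ioc, mem_diff, mem_setOf_eq, not_le]
      tauto
    have hmono : {v : Fin m → ℝ | gauge K v ≤ a} ⊆ {v | gauge K v ≤ b} :=
      fun v hv => le_trans hv hab.le
    rw [hpre, measure_diff hmono
      ((isClosed_le hg continuous_const).measurableSet.nullMeasurableSet) (hfin a),
      hvol a, hvol b]
    rw [lintegral_indicator measurableSet_Ici, Measure.restrict_restrict measurableSet_Ici]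
    rcases le_or_gt b 0 with hb | hb
    · have hmaxb : max b 0 = 0 := max_eq_right hb
      have hmaxa : max a 0 = 0 := max_eq_right (hab.trans_le hb).le
      have hz : ∫⁻ u in Ici 0 ∩ Ioc a b, ENNReal.ofReal (↑m * u ^ (m - 1)) = 0 := by
        have hsub : Ici 0 ∩ Ioc a b ⊆ {(0 : ℝ)} := by
          intro u hu
          have h1 : (0 : ℝ) ≤ u := hu.1
          have h2 : u ≤ 0 := hu.2.2.trans hb
          simp [le_antisymm h2 h1]
        refine le_antisymm ?_ (by simp)
        calc ∫⁻ u in Ici 0 ∩ Ioc a b, ENNReal.ofReal (↑m * u ^ (m - 1))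
            ≤ ∫⁻ _ in Ici 0 ∩ Ioc a b, ⊤ := lintegral_mono fun u => le_top
          _ = ⊤ * volume (Ici 0 ∩ Ioc a b) := by rw [setLIntegral_const]
          _ ≤ 0 := by
              rw [measure_mono_null hsub (measure_singleton 0), mul_zero]
      rw [hz, mul_zero, hmaxa, hmaxb, zero_pow hm.ne', ENNReal.ofReal_zero, zero_mul,
        tsub_self]
    · set a' := max a 0 with ha'def
      have ha'0 : 0 ≤ a' := le_max_right a 0
      have ha'b : a' < b := max_lt hab hb
      have hmaxb : max b 0 = b := max_eq_left hb.le
      have hset : (Ici (0:ℝ) ∩ Ioc a b : Set ℝ) =ᵐ[volume] (Ioc a' b : Set ℝ) := by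
        rcases le_or_gt 0 a with ha | ha
        · have h1 : Ici 0 ∩ Ioc a b = Ioc a b := by
            apply inter_eq_right.2
            intro u hu
            exact (ha.trans hu.1.le : (0:ℝ) ≤ u)
          rw [h1, ha'def, max_eq_left ha]
          exact Filter.EventuallyEq.rfl
        · have h1 : Ici 0 ∩ Ioc a b = Icc 0 b := by
            ext u
            simp only [mem_inter_iff, mem_Ici, mem_Ioc, mem_Icc]
            constructor
            · rintro ⟨h1, _, h3⟩; exact ⟨h1, h3⟩
            · rintro ⟨h1, h2⟩; exact ⟨h1, ha.trans_le h1, h2⟩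
          rw [h1, ha'def, max_eq_right ha.le]
          exact (Ioc_ae_eq_Icc).symm
      rw [setLIntegral_congr hset]
      have hint : IntegrableOn (fun u : ℝ => (m : ℝ) * u ^ (m - 1)) (Ioc a' b) volume := by
        apply Continuous.integrableOn_Ioc
        continuity
      have hnn : 0 ≤ᵐ[volume.restrict (Ioc a' b)] fun u : ℝ => (m : ℝ) * u ^ (m - 1) := by
        filter_upwards [ae_restrict_mem measurableSet_Ioc] with u hu
        have : (0:ℝ) ≤ u := ha'0.trans hu.1.le
        positivity
      rw [← ofReal_integral_eq_lintegral_ofReal hint hnn]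
      have hval : ∫ u in Ioc a' b, (m : ℝ) * u ^ (m - 1) = b ^ m - a' ^ m := by
        rw [← intervalIntegral.integral_of_le ha'b.le, intervalIntegral.integral_const_mul,
          integral_pow]
        have h1 : m - 1 + 1 = m := Nat.succ_pred_eq_of_pos hm
        have h2 : ((m - 1 : ℕ) : ℝ) + 1 = (m : ℝ) := by
          rw [Nat.cast_sub hm]; ring
        rw [h1, h2]
        field_simp
      rw [hval, hmaxb, ← ENNReal.sub_mul (fun _ _ => hKfin),
        ← ENNReal.ofReal_sub _ (pow_nonneg ha'0 m), mul_comm]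

theorem KMech.aux_key {m : ℕ} (hm : 0 < m) (K : Set (Fin m → ℝ)) (hconv : Convex ℝ K)
    (hbdd : Bornology.IsBounded K) (habs : Absorbent ℝ K) (hnhds : K ∈ 𝓝 0)
    (φ : ℝ → ℝ≥0∞) (hφ : Measurable φ) :
    ∫⁻ v, φ (gauge K v) ∂volume = volume K *
      ∫⁻ u, (Set.indicator (Ici 0) fun u => ENNReal.ofReal (m * u ^ (m - 1))) u * φ u := by
  have hg : Continuous (gauge K) := continuous_gauge hconv hnhds
  have hD : Measurable (Set.indicator (Ici (0:ℝ)) fun u => ENNReal.ofReal (m * u ^ (m - 1))) :=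
    (ENNReal.measurable_ofReal.comp (by measurability)).indicator measurableSet_Ici
  rw [← lintegral_map hφ hg.measurable, KMech.aux_map hm K hconv hbdd habs hnhds,
    lintegral_smul_measure,
    lintegral_withDensity_eq_lintegral_mul volume hD hφ]
  rfl

theorem KMech.aux_pt {m : ℕ} (hm : 0 < m) (a : ℝ) (ha : 0 < a) (u : ℝ) :
    (Set.indicator (Ici (0:ℝ)) fun u => ENNReal.ofReal (m * u ^ (m - 1))) u *
      ENNReal.ofReal (Real.exp (-a * u)) =
    ENNReal.ofReal (m * Real.Gamma m / a ^ m) * ProbabilityTheory.gammaPDF m a u := by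
  rcases lt_or_ge u 0 with hu | hu
  · rw [Set.indicator_of_notMem (by simpa using hu.not_ge), zero_mul,
      ProbabilityTheory.gammaPDF_of_neg hu, mul_zero]
  · rw [Set.indicator_of_mem (by simpa using hu), ProbabilityTheory.gammaPDF_of_nonneg hu,
      ← ENNReal.ofReal_mul (by positivity), ← ENNReal.ofReal_mul (by positivity)]
    congr 1
    have h1 : u ^ ((m : ℝ) - 1) = u ^ (m - 1 : ℕ) := by
      rw [show ((m : ℝ) - 1) = ((m - 1 : ℕ) : ℝ) by rw [Nat.cast_sub hm]; push_cast; ring,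
        Real.rpow_natCast]
    have h2 : a ^ (m : ℝ) = a ^ (m : ℕ) := by rw [Real.rpow_natCast]
    rw [h1, h2]
    have hΓ : Real.Gamma m ≠ 0 := (Real.Gamma_pos_of_pos (by exact_mod_cast hm)).ne'
    have ham : (a : ℝ) ^ (m : ℕ) ≠ 0 := pow_ne_zero _ ha.ne'
    field_simp

theorem KMech.aux_total {m : ℕ} (hm : 0 < m) (K : Set (Fin m → ℝ)) (hconv : Convex ℝ K)
    (hbdd : Bornology.IsBounded K) (habs : Absorbent ℝ K) (hnhds : K ∈ 𝓝 0)
    (a : ℝ) (ha : 0 < a) :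
    ∫⁻ v, ENNReal.ofReal (Real.exp (-a * gauge K v)) ∂volume
      = volume K * ENNReal.ofReal (m * Real.Gamma m / a ^ m) := by
  have hm' : (0:ℝ) < m := Nat.cast_pos.2 hm
  have hpdf : Measurable (ProbabilityTheory.gammaPDF m a) :=
    (ProbabilityTheory.measurable_gammaPDFReal m a).ennreal_ofReal
  have hφ : Measurable fun u : ℝ => ENNReal.ofReal (Real.exp (-a * u)) :=
    (Real.measurable_exp.comp (measurable_id.const_mul (-a))).ennreal_ofReal
  rw [KMech.aux_key hm K hconv hbdd habs hnhds _ hφ]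
  have h1 : ∫⁻ u, (Set.indicator (Ici 0) fun u => ENNReal.ofReal (m * u ^ (m - 1))) u *
      ENNReal.ofReal (Real.exp (-a * u)) = ENNReal.ofReal (m * Real.Gamma m / a ^ m) := by
    simp_rw [KMech.aux_pt hm a ha]
    rw [lintegral_const_mul _ hpdf, ProbabilityTheory.lintegral_gammaPDF_eq_one hm' ha, mul_one]
  rw [h1]

theorem KMech.aux_sub {m : ℕ} (hm : 0 < m) (K : Set (Fin m → ℝ)) (hconv : Convex ℝ K)
    (hbdd : Bornology.IsBounded K) (habs : Absorbent ℝ K) (hnhds : K ∈ 𝓝 0)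
    (a : ℝ) (ha : 0 < a) (t : ℝ) :
    ∫⁻ v in {v | gauge K v ≤ t}, ENNReal.ofReal (Real.exp (-a * gauge K v)) ∂volume
      = volume K * ENNReal.ofReal (m * Real.Gamma m / a ^ m) *
          ENNReal.ofReal (ProbabilityTheory.gammaCDFReal m a t) := by
  have hm' : (0:ℝ) < m := Nat.cast_pos.2 hm
  have hg : Continuous (gauge K) := continuous_gauge hconv hnhds
  have hpdf : Measurable (ProbabilityTheory.gammaPDF m a) :=
    (ProbabilityTheory.measurable_gammaPDFReal m a).ennreal_ofReal
  set φ0 : ℝ → ℝ≥0∞ := fun u => ENNReal.ofReal (Real.exp (-a * u)) with hφ0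
  have hφ0m : Measurable φ0 :=
    (Real.measurable_exp.comp (measurable_id.const_mul (-a))).ennreal_ofReal
  have hsetm : MeasurableSet {v : Fin m → ℝ | gauge K v ≤ t} :=
    (isClosed_le hg continuous_const).measurableSet
  have hsetpre : {v : Fin m → ℝ | gauge K v ≤ t} = gauge K ⁻¹' Iic t := rfl
  have h1 : ∫⁻ v in {v | gauge K v ≤ t}, φ0 (gauge K v) ∂volume
      = ∫⁻ v, ((Iic t).indicator φ0) (gauge K v) ∂volume := by
    rw [← lintegral_indicator hsetm]
    refine lintegral_congr fun v => ?_
    rw [hsetpre]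
    exact (Set.indicator_comp_right (gauge K) (g := φ0) (s := Iic t) (x := v)).symm
  rw [h1, KMech.aux_key hm K hconv hbdd habs hnhds _ (hφ0m.indicator measurableSet_Iic)]
  have h2 : ∀ u : ℝ, (Set.indicator (Ici 0) fun u => ENNReal.ofReal (m * u ^ (m - 1))) u *
      (Iic t).indicator φ0 u = (Iic t).indicator (fun u =>
        ENNReal.ofReal (m * Real.Gamma m / a ^ m) * ProbabilityTheory.gammaPDF m a u) u := by
    intro u
    rw [← Set.indicator_mul_right _ _ φ0]
    exact congrFun (Set.indicator_congr fun u _ => KMech.aux_pt hm a ha u) u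
  simp_rw [h2]
  rw [lintegral_indicator measurableSet_Iic, lintegral_const_mul _ hpdf]
  have hfin : ∫⁻ u in Iic t, ProbabilityTheory.gammaPDF m a u ≠ ⊤ := by
    refine ne_of_lt (lt_of_le_of_lt (setLIntegral_le_lintegral _ _) ?_)
    rw [ProbabilityTheory.lintegral_gammaPDF_eq_one hm' ha]
    exact ENNReal.one_lt_top
  rw [ProbabilityTheory.gammaCDFReal, ProbabilityTheory.cdf_gammaMeasure_eq_lintegral hm' ha, ENNReal.ofReal_toReal hfin, mul_assoc]

theorem KMech.aux_quantile {m : ℕ} (hm : 0 < m) (a : ℝ) (ha : 0 < a) {α : ℝ}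
    (hα : α ∈ Ioo (0:ℝ) 1) :
    ∃ t : ℝ, 0 < t ∧ ProbabilityTheory.gammaCDFReal m a t = α := by
  have hm' : (0:ℝ) < m := Nat.cast_pos.2 hm
  have hpdfInt : Integrable (ProbabilityTheory.gammaPDFReal m a) volume := by
    refine ⟨(ProbabilityTheory.measurable_gammaPDFReal m a).aestronglyMeasurable, ?_⟩
    rw [hasFiniteIntegral_iff_ofReal
      (ae_of_all _ (ProbabilityTheory.gammaPDFReal_nonneg hm' ha))]
    have : ∫⁻ u, ENNReal.ofReal (ProbabilityTheory.gammaPDFReal m a u) = 1 :=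
      ProbabilityTheory.lintegral_gammaPDF_eq_one hm' ha
    rw [this]
    exact ENNReal.one_lt_top
  have hcont : Continuous fun t => ∫ u in (0:ℝ)..t, ProbabilityTheory.gammaPDFReal m a u :=
    hpdfInt.continuous_primitive 0
  have heq : ∀ t : ℝ, 0 ≤ t → ProbabilityTheory.gammaCDFReal m a t
      = ∫ u in (0:ℝ)..t, ProbabilityTheory.gammaPDFReal m a u := by
    intro t ht
    rw [ProbabilityTheory.gammaCDFReal, ProbabilityTheory.cdf_gammaMeasure_eq_integral hm' ha]
    rw [← Iic_union_Ioc_eq_Iic ht, setIntegral_union (Iic_disjoint_Ioc le_rfl)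
      measurableSet_Ioc hpdfInt.integrableOn hpdfInt.integrableOn]
    have hzero : ∫ u in Iic (0:ℝ), ProbabilityTheory.gammaPDFReal m a u = 0 := by
      apply integral_eq_zero_of_ae
      have hne : ∀ᵐ u : ℝ ∂volume.restrict (Iic 0), u ≠ 0 := by
        refine ae_restrict_of_ae ?_
        rw [ae_iff]
        have : {u : ℝ | ¬ u ≠ 0} = {0} := by ext u; simp
        rw [this]
        exact measure_singleton 0
      filter_upwards [ae_restrict_mem measurableSet_Iic, hne] with u hu hune
      have : u < 0 := lt_of_le_of_ne hu hune
      simp [ProbabilityTheory.gammaPDFReal, not_le.2 this]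
    rw [hzero, zero_add, intervalIntegral.integral_of_le ht]
  haveI := ProbabilityTheory.isProbabilityMeasure_gammaMeasure hm' ha
  have htop : Tendsto (fun t => ProbabilityTheory.gammaCDFReal m a t) atTop (𝓝 1) :=
    ProbabilityTheory.tendsto_cdf_atTop _
  obtain ⟨X, hX1, hX0⟩ :=
    ((htop.eventually (eventually_gt_nhds hα.2)).and (eventually_ge_atTop 0)).exists
  have hmem : α ∈ Ioo (∫ u in (0:ℝ)..(0:ℝ), ProbabilityTheory.gammaPDFReal m a u)
      (∫ u in (0:ℝ)..X, ProbabilityTheory.gammaPDFReal m a u) := by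
    rw [intervalIntegral.integral_same, ← heq X hX0]
    exact ⟨hα.1, hX1⟩
  obtain ⟨t, htmem, hteq⟩ := intermediate_value_Ioo hX0 hcont.continuousOn hmem
  exact ⟨t, htmem.1, by rw [heq t htmem.1.le]; exact hteq⟩

end Aux

open Filter Topology
open scoped ENNReal NNReal

/-- concentration sets of the $K$-norm mechanism: if `V` has density
proportional to `exp(-a‖v‖_K)`, then for each `α ∈ (0,1)` the `α`-concentration set of `V`
is `t ⋅ K`, where `t` is the `α`-quantile of `Gamma(m, a)`. -/
theorem concSet_of_K_mech {m : ℕ} (hm : 0 < m) (K : Set (Fin m → ℝ))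
    (hK : IsNormBall K) (hKmeas : MeasurableSet K) (a : ℝ) (ha : 0 < a)
    (f : (Fin m → ℝ) → ℝ)
    (hf : f = fun v => Real.exp (-a * gauge K v) /
      ∫ w : Fin m → ℝ, Real.exp (-a * gauge K w)) :
    ∀ α ∈ Ioo (0 : ℝ) 1, ∃ t : ℝ, 0 < t ∧
      ProbabilityTheory.gammaCDFReal m a t = α ∧ IsConcSet f α (t • K) := by
  obtain ⟨hconv, hbdd, habs, hsymm⟩ := hK
  intro α hα
  have hnhds : K ∈ 𝓝 (0 : Fin m → ℝ) := KMech.aux_nhds K hconv habs hsymm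
  have h0K : (0 : Fin m → ℝ) ∈ K := habs.zero_mem
  have hg : Continuous (gauge K) := continuous_gauge hconv hnhds
  have hm' : (0:ℝ) < m := Nat.cast_pos.2 hm
  have hc'pos : (0:ℝ) < ↑m * Real.Gamma ↑m / a ^ m := by
    have := Real.Gamma_pos_of_pos hm'
    positivity
  set C : ℝ≥0∞ := volume K * ENNReal.ofReal (↑m * Real.Gamma ↑m / a ^ m) with hC
  have hKvol0 : volume K ≠ 0 :=
    (Measure.measure_pos_of_mem_nhds volume hnhds).ne'
  have hKvolfin : volume K ≠ ⊤ := hbdd.measure_lt_top.ne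
  have hC0 : C ≠ 0 := mul_ne_zero hKvol0 (ENNReal.ofReal_pos.2 hc'pos).ne'
  have hCtop : C ≠ ⊤ := ENNReal.mul_ne_top hKvolfin ENNReal.ofReal_ne_top
  have hexpmeas : Measurable fun v => Real.exp (-a * gauge K v) :=
    Real.measurable_exp.comp (hg.measurable.const_mul (-a))
  have htot := KMech.aux_total hm K hconv hbdd habs hnhds a ha
  have hIntExp : Integrable (fun v => Real.exp (-a * gauge K v)) volume := by
    refine ⟨hexpmeas.aestronglyMeasurable, ?_⟩
    rw [hasFiniteIntegral_iff_ofReal (ae_of_all _ fun v => (Real.exp_pos _).le), htot]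
    exact lt_top_iff_ne_top.2 hCtop
  have hNeq : (∫ w, Real.exp (-a * gauge K w)) = C.toReal := by
    rw [integral_eq_lintegral_of_nonneg_ae (ae_of_all _ fun v => (Real.exp_pos _).le)
      hexpmeas.aestronglyMeasurable, htot]
  have hNpos : 0 < C.toReal := ENNReal.toReal_pos hC0 hCtop
  have hfx : ∀ x, f x = Real.exp (-a * gauge K x) / C.toReal := by
    intro x
    simp only [hf]
    rw [hNeq]
  have hfint : Integrable f volume := by
    rw [hf]; exact hIntExp.div_const _
  have hsetint : ∀ T : Set (Fin m → ℝ), ∫ x in T, f x =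
      (∫⁻ v in T, ENNReal.ofReal (Real.exp (-a * gauge K v))).toReal / C.toReal := by
    intro T
    simp_rw [hfx]
    rw [integral_div, integral_eq_lintegral_of_nonneg_ae
      (ae_of_all _ fun v => (Real.exp_pos _).le) hexpmeas.aestronglyMeasurable.restrict]
  obtain ⟨t, ht0, hγ⟩ := KMech.aux_quantile hm a ha hα
  refine ⟨t, ht0, hγ, ?_⟩
  have hSsub : t • K ⊆ {v | gauge K v ≤ t} := by
    rintro v ⟨k, hk, rfl⟩
    show gauge K (t • k) ≤ t
    rw [gauge_smul_of_nonneg ht0.le, smul_eq_mul]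
    calc t * gauge K k ≤ t * 1 := mul_le_mul_of_nonneg_left (gauge_le_one_of_mem hk) ht0.le
      _ = t := mul_one t
  have hsub2 : {v | gauge K v < t} ⊆ t • K := by
    intro v hv
    rw [mem_smul_set_iff_inv_smul_mem₀ ht0.ne']
    refine gauge_lt_one_subset_self hconv h0K habs ?_
    rw [mem_setOf_eq, gauge_smul_of_nonneg (inv_nonneg.2 ht0.le), smul_eq_mul,
      ← div_eq_inv_mul, div_lt_one ht0]
    exact hv
  have hfr : volume {v : Fin m → ℝ | gauge K v = t} = 0 := by
    have hsub3 : {v : Fin m → ℝ | gauge K v = t} ⊆ t • frontier K := by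
      intro v hv
      rw [mem_smul_set_iff_inv_smul_mem₀ ht0.ne']
      refine mem_frontier_of_gauge_eq_one hconv h0K habs ?_
      rw [gauge_smul_of_nonneg (inv_nonneg.2 ht0.le), smul_eq_mul, hv, inv_mul_cancel₀ ht0.ne']
    refine measure_mono_null hsub3 ?_
    rw [Measure.addHaar_smul_of_nonneg volume ht0.le, hconv.addHaar_frontier volume, mul_zero]
  have hSmeas : MeasurableSet (t • K) := by
    have hps : t • K = (fun v : Fin m → ℝ => t⁻¹ • v) ⁻¹' K := by
      ext v; rw [mem_preimage, mem_smul_set_iff_inv_smul_mem₀ ht0.ne']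
    rw [hps]
    exact hKmeas.preimage (measurable_const_smul t⁻¹)
  have hSae : (t • K : Set (Fin m → ℝ)) =ᵐ[volume] {v | gauge K v ≤ t} := by
    rw [ae_eq_set]
    constructor
    · rw [Set.diff_eq_empty.2 hSsub, measure_empty]
    · refine measure_mono_null (fun v hv => ?_) hfr
      exact le_antisymm hv.1 (not_lt.1 fun h => hv.2 (hsub2 h))
  have hSlint : ∫⁻ v in (t • K), ENNReal.ofReal (Real.exp (-a * gauge K v)) ∂volume
      = C * ENNReal.ofReal α := by
    rw [setLIntegral_congr hSae, KMech.aux_sub hm K hconv hbdd habs hnhds a ha t, hγ]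
  have hSint : ∫ x in (t • K), f x = α := by
    rw [hsetint _, hSlint, ENNReal.toReal_mul, ENNReal.toReal_ofReal hα.1.le,
      mul_comm, mul_div_assoc, div_self hNpos.ne', mul_one]
  have hSfin : volume (t • K) ≠ ⊤ := by
    refine ne_of_lt (lt_of_le_of_lt (measure_mono hSsub) ?_)
    rw [KMech.aux_vol hm K hconv hbdd habs hnhds t]
    exact ENNReal.mul_lt_top ENNReal.ofReal_lt_top (lt_top_iff_ne_top.2 hKvolfin)
  refine ⟨hSmeas, hSint.ge, ?_⟩
  intro T hT hTα
  by_cases hTfin : volume T = ⊤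
  · rw [hTfin]; exact le_top
  set c : ℝ := Real.exp (-a * t) / C.toReal with hc
  have hcpos : 0 < c := div_pos (Real.exp_pos _) hNpos
  have hfS : ∀ x ∈ t • K, c ≤ f x := by
    intro x hx
    rw [hfx x, hc]
    have hgx : gauge K x ≤ t := hSsub hx
    have h1 : Real.exp (-a * t) ≤ Real.exp (-a * gauge K x) :=
      Real.exp_le_exp.2 (by nlinarith)
    exact (div_le_div_iff_of_pos_right hNpos).2 h1
  have hfT' : ∀ x, x ∉ t • K → f x ≤ c := by
    intro x hx
    rw [hfx x, hc]
    have htx : t ≤ gauge K x := not_lt.1 fun h => hx (hsub2 h)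
    have h1 : Real.exp (-a * gauge K x) ≤ Real.exp (-a * t) :=
      Real.exp_le_exp.2 (by nlinarith)
    exact (div_le_div_iff_of_pos_right hNpos).2 h1
  have hAm : MeasurableSet ((t • K) \ T) := hSmeas.diff hT
  have hBm : MeasurableSet (T \ (t • K)) := hT.diff hSmeas
  have hAfin : volume ((t • K) \ T) ≠ ⊤ :=
    ((measure_mono diff_subset).trans_lt (lt_top_iff_ne_top.2 hSfin)).ne
  have hBfin : volume (T \ (t • K)) ≠ ⊤ :=
    ((measure_mono diff_subset).trans_lt (lt_top_iff_ne_top.2 hTfin)).ne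
  have hdisj1 : Disjoint ((t • K) ∩ T) ((t • K) \ T) :=
    Set.disjoint_left.2 fun x hx1 hx2 => hx2.2 hx1.2
  have hdisj2 : Disjoint (T ∩ (t • K)) (T \ (t • K)) :=
    Set.disjoint_left.2 fun x hx1 hx2 => hx2.2 hx1.2
  have hsplit1 : ∫ x in (t • K), f x
      = (∫ x in (t • K) ∩ T, f x) + ∫ x in (t • K) \ T, f x := by
    rw [← setIntegral_union hdisj1 hAm hfint.integrableOn hfint.integrableOn,
      inter_union_diff]
  have hsplit2 : ∫ x in T, f x
      = (∫ x in T ∩ (t • K), f x) + ∫ x in T \ (t • K), f x := by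
    rw [← setIntegral_union hdisj2 hBm hfint.integrableOn hfint.integrableOn,
      inter_union_diff]
  have hcomm : ∫ x in (t • K) ∩ T, f x = ∫ x in T ∩ (t • K), f x := by rw [inter_comm]
  have hkey : ∫ x in (t • K) \ T, f x ≤ ∫ x in T \ (t • K), f x := by
    linarith [hTα, hSint, hsplit1, hsplit2, hcomm]
  have hlow : c * (volume ((t • K) \ T)).toReal ≤ ∫ x in (t • K) \ T, f x :=
    setIntegral_ge_of_const_le_real hAm hAfin (fun x hx => hfS x hx.1) hfint.integrableOn
  have hupp : ∫ x in T \ (t • K), f x ≤ c * (volume (T \ (t • K))).toReal := by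
    have h1 : ∫ x in T \ (t • K), f x ≤ ∫ x in T \ (t • K), (fun _ => c) x :=
      setIntegral_mono_on hfint.integrableOn
        (integrableOn_const hBfin) hBm
        (fun x hx => hfT' x hx.2)
    rwa [setIntegral_const, smul_eq_mul, mul_comm] at h1
  have hAB : volume ((t • K) \ T) ≤ volume (T \ (t • K)) := by
    have h2 : c * (volume ((t • K) \ T)).toReal ≤ c * (volume (T \ (t • K))).toReal :=
      hlow.trans (hkey.trans hupp)
    have h3 := le_of_mul_le_mul_left h2 hcpos
    exact (ENNReal.toReal_le_toReal hAfin hBfin).1 h3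
  calc volume (t • K) = volume ((t • K) ∩ T) + volume ((t • K) \ T) :=
        (measure_inter_add_diff _ hT).symm
    _ ≤ volume ((t • K) ∩ T) + volume (T \ (t • K)) := add_le_add le_rfl hAB
    _ = volume (T ∩ (t • K)) + volume (T \ (t • K)) := by rw [inter_comm]
    _ = volume T := measure_inter_add_diff _ hSmeas
end
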